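/- Let R →^β A_0 →^γ A_1 be ring homomorphisms with α = γ ∘ β, and suppose A_0 is Noetherian as a left R-module via β. Then PC_l(α) holds if and only if PC_l(γ) holds. -/

import Mathlib

/-- A left ideal `L` of `A` is `R`-cofinite (via `α : R →+* A`) if `A ⧸ L` is a
Noetherian left `R`-module via restriction of scalars along `α`. -/
def RCofiniteIdeal {R A : Type*} [Ring R] [Ring A] (α : R →+* A)
    (L : Submodule A A) : Prop :=
  @IsNoetherian R (A ⧸ L) _ _ (Module.compHom _ α)

/-- `s ∈ A` is left `R`-cofinite if `A ⧸ As` is a Noetherian left `R`-module via `α`. -/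
def LeftCofinite {R A : Type*} [Ring R] [Ring A] (α : R →+* A) (s : A) : Prop :=
  RCofiniteIdeal α (Submodule.span A {s})

/-- `PC_l(α)`: every `R`-cofinite left ideal of `A` contains a left `R`-cofinite element. -/
def PCl {R A : Type*} [Ring R] [Ring A] (α : R →+* A) : Prop :=
  ∀ L : Submodule A A, RCofiniteIdeal α L → ∃ s ∈ L, LeftCofinite α s

/-- Key module-theoretic lemma: if `M / A₀ / R` is a scalar tower with `A₀` a Noetherian
`R`-module, then `M` is Noetherian over `R` iff it is Noetherian over `A₀`. -/
lemma isNoetherian_iff_of_tower {R A₀ M : Type*} [Ring R] [Ring A₀] [AddCommGroup M]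
    [Module R A₀] [Module A₀ M] [Module R M] [IsScalarTower R A₀ M] [IsScalarTower R A₀ A₀]
    (hA₀ : IsNoetherian R A₀) : IsNoetherian R M ↔ IsNoetherian A₀ M := by
  constructor
  · exact fun h => isNoetherian_of_tower R h
  · intro h
    haveI := h
    obtain ⟨n, f, hf⟩ := Module.Finite.exists_fin' A₀ M
    haveI := hA₀
    haveI : IsNoetherian R (Fin n → A₀) := inferInstance
    exact isNoetherian_of_surjective (f.restrictScalars R)
      (LinearMap.range_eq_top.mpr hf)

lemma rcofinite_comp_iff {R A₀ A₁ : Type*} [Ring R] [Ring A₀] [Ring A₁]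
    (β : R →+* A₀) (γ : A₀ →+* A₁)
    (hA₀ : @IsNoetherian R A₀ _ _ (Module.compHom A₀ β)) (L : Submodule A₁ A₁) :
    RCofiniteIdeal (γ.comp β) L ↔ RCofiniteIdeal γ L := by
  letI mRA : Module R A₀ := Module.compHom A₀ β
  letI mR : Module R (A₁ ⧸ L) := Module.compHom _ (γ.comp β)
  letI mA : Module A₀ (A₁ ⧸ L) := Module.compHom _ γ
  haveI : IsScalarTower R A₀ A₀ := ⟨fun r a b => mul_assoc (β r) a b⟩
  haveI : IsScalarTower R A₀ (A₁ ⧸ L) := ⟨fun r a x => by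
    show γ (β r * a) • x = γ (β r) • γ a • x
    rw [map_mul, mul_smul]⟩
  exact isNoetherian_iff_of_tower hA₀

/-- Let `R →β A₀ →γ A₁` with `α = γ ∘ β`, and suppose `A₀` is Noetherian as a left
`R`-module via `β`. Then `PC_l(α)` holds iff `PC_l(γ)` holds. -/
theorem pcl_comp_iff_of_noetherian {R A₀ A₁ : Type*} [Ring R] [Ring A₀] [Ring A₁]
    (β : R →+* A₀) (γ : A₀ →+* A₁)
    (hA₀ : @IsNoetherian R A₀ _ _ (Module.compHom A₀ β)) :
    PCl (γ.comp β) ↔ PCl γ := by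
  constructor
  · intro h L hL
    obtain ⟨s, hs, hcof⟩ := h L ((rcofinite_comp_iff β γ hA₀ L).mpr hL)
    exact ⟨s, hs, (rcofinite_comp_iff β γ hA₀ _).mp hcof⟩
  · intro h L hL
    obtain ⟨s, hs, hcof⟩ := h L ((rcofinite_comp_iff β γ hA₀ L).mp hL)
    exact ⟨s, hs, (rcofinite_comp_iff β γ hA₀ _).mpr hcof⟩
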